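/- arXiv:1407.7593 — 4 statements merged into one kernel-verified Lean document; each statement's English description precedes it below -/
import Mathlib

section
/- In the polynomial ring quotient R(n) = Q[x_1,...,x_n]/(e_1,...,e_n), where e_i denotes the i-th elementary symmetric polynomial in x_1,...,x_n, the identity (1 - x_1 t)^{-1} ··· (1 - x_d t)^{-1} = (1 - x_{d+1} t) ··· (1 - x_n t) holds in R(n)[[t]] for any 0 ≤ d ≤ n. -/
open MvPolynomial

lemma aux_prod_one (n : ℕ) (I : Ideal (MvPolynomial (Fin n) ℚ))
    (hI : I = Ideal.span (Set.range fun i : Fin n => esymm (Fin n) ℚ ((i : ℕ) + 1))) :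
    (∏ i : Fin n,
      (1 - PowerSeries.C (Ideal.Quotient.mk I (X i)) *
        PowerSeries.X)) = 1 := by
  set R := MvPolynomial (Fin n) ℚ ⧸ I
  have hzero : ∀ k, 1 ≤ k → k ≤ n → Ideal.Quotient.mk I (esymm (Fin n) ℚ k) = 0 := by
    intro k h1 h2
    rw [Ideal.Quotient.eq_zero_iff_mem, hI]
    apply Ideal.subset_span
    refine ⟨⟨k - 1, by omega⟩, ?_⟩
    simp only [Fin.val_mk]
    congr 1
    omega
  have step1 : (∏ i : Fin n,
      (1 - PowerSeries.C (Ideal.Quotient.mk I (X i)) * PowerSeries.X)) =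
      ∑ t ∈ (Finset.univ : Finset (Fin n)).powerset,
        PowerSeries.C (Ideal.Quotient.mk I (∏ i ∈ t, X i)) * (-PowerSeries.X) ^ t.card := by
    have : ∀ i : Fin n, (1 : PowerSeries R) - PowerSeries.C (Ideal.Quotient.mk I (X i)) * PowerSeries.X
        = PowerSeries.C (Ideal.Quotient.mk I (X i)) * (-PowerSeries.X) + 1 := by
      intro i; ring
    simp_rw [this]
    rw [Finset.prod_add]
    refine Finset.sum_congr rfl fun t ht => ?_
    rw [Finset.prod_mul_distrib, Finset.prod_const, map_prod, map_prod]
    simp [mul_assoc]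
  rw [step1, Finset.sum_powerset]
  have hcard : (Finset.univ : Finset (Fin n)).card = n := by simp
  rw [hcard]
  have step2 : ∀ j ∈ Finset.range (n + 1),
      (∑ t ∈ Finset.powersetCard j (Finset.univ : Finset (Fin n)),
        PowerSeries.C (Ideal.Quotient.mk I (∏ i ∈ t, X i)) * (-PowerSeries.X) ^ t.card)
      = PowerSeries.C (Ideal.Quotient.mk I (esymm (Fin n) ℚ j)) * (-PowerSeries.X) ^ j := by
    intro j hj
    rw [esymm, map_sum, map_sum, Finset.sum_mul]
    refine Finset.sum_congr rfl fun t ht => ?_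
    rw [(Finset.mem_powersetCard.mp ht).2]
  rw [Finset.sum_congr rfl step2]
  rw [Finset.sum_eq_single 0]
  · simp [esymm]
  · intro j hj hj0
    have hjn : j ≤ n := by
      have := Finset.mem_range.mp hj; omega
    rw [hzero j (by omega) hjn, map_zero, zero_mul]
  · intro h
    exact absurd (Finset.mem_range.mpr (by omega)) h

/-- In `R(n) = ℚ[x₁,…,xₙ]/(e₁,…,eₙ)`, the identity
`∏_{i≤d} (1 - xᵢ t)⁻¹ = ∏_{i>d} (1 - xᵢ t)` holds in `R(n)[[t]]`. -/
theorem stmt0 (n : ℕ) (hn : 0 < n) (d : ℕ) (hd : d ≤ n)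
    (I : Ideal (MvPolynomial (Fin n) ℚ))
    (hI : I = Ideal.span (Set.range fun i : Fin n => esymm (Fin n) ℚ ((i : ℕ) + 1))) :
    Ring.inverse
        (∏ i ∈ Finset.univ.filter (fun i : Fin n => (i : ℕ) < d),
          (1 - PowerSeries.C (Ideal.Quotient.mk I (X i)) *
            PowerSeries.X)) =
      ∏ i ∈ Finset.univ.filter (fun i : Fin n => d ≤ (i : ℕ)),
        (1 - PowerSeries.C (Ideal.Quotient.mk I (X i)) *
          PowerSeries.X) := by
  have hmul :
      (∏ i ∈ Finset.univ.filter (fun i : Fin n => (i : ℕ) < d),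
          (1 - PowerSeries.C (Ideal.Quotient.mk I (X i)) *
            PowerSeries.X)) *
      (∏ i ∈ Finset.univ.filter (fun i : Fin n => d ≤ (i : ℕ)),
          (1 - PowerSeries.C (Ideal.Quotient.mk I (X i)) *
            PowerSeries.X)) = 1 := by
    have hfilter : Finset.univ.filter (fun i : Fin n => d ≤ (i : ℕ)) =
        Finset.univ.filter (fun i : Fin n => ¬ (i : ℕ) < d) := by
      simp [Nat.not_lt]
    rw [hfilter, Finset.prod_filter_mul_prod_filter_not]
    exact aux_prod_one n I hI
  have hu := Units.mkOfMulEqOne _ _ hmul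
  have : Ring.inverse ((Units.mkOfMulEqOne _ _ hmul : (PowerSeries (MvPolynomial (Fin n) ℚ ⧸ I))ˣ) : PowerSeries (MvPolynomial (Fin n) ℚ ⧸ I)) = ↑(Units.mkOfMulEqOne _ _ hmul)⁻¹ := Ring.inverse_unit _
  exact this
end

section
/- In the quotient ring R(n) = Q[x_1,...,x_n]/(e_1,...,e_n), for every r ≥ 0 and 0 ≤ d ≤ n, the complete homogeneous symmetric polynomial satisfies h_r(x_1,...,x_d) = (-1)^r e_r(x_{d+1},...,x_n). -/
open MvPolynomial

/-- The `r`-th elementary symmetric polynomial in the variables indexed by `s`. -/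
noncomputable def esub (n : ℕ) (s : Finset (Fin n)) (r : ℕ) : MvPolynomial (Fin n) ℚ :=
  ∑ A ∈ s.powersetCard r, ∏ i ∈ A, X i

/-- The `r`-th complete homogeneous symmetric polynomial in the variables indexed by `s`. -/
noncomputable def hsub (n : ℕ) (s : Finset (Fin n)) (r : ℕ) : MvPolynomial (Fin n) ℚ :=
  ∑ m ∈ s.sym r, (Multiset.map X (m : Multiset (Fin n))).prod

section aux

variable {R : Type*} [CommRing R] {ι : Type*} [DecidableEq ι]

lemma prod_neg_aux (s : Finset ι) (c : ι → R) :
    ∏ i ∈ s, (-c i) = (-1) ^ s.card * ∏ i ∈ s, c i := by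
  rw [← Finset.prod_const, ← Finset.prod_mul_distrib]
  simp [neg_one_mul]

/-- Coefficient of a product of `1 + c i * X`. -/
lemma coeff_prod_one_add (s : Finset ι) (c : ι → R) (k : ℕ) :
    PowerSeries.coeff (R := R) k (∏ i ∈ s, (1 + PowerSeries.C (R := R) (c i) * PowerSeries.X)) =
      ∑ A ∈ s.powersetCard k, ∏ i ∈ A, c i := by
  induction s using Finset.induction_on generalizing k with
  | empty =>
    cases k with
    | zero => simp
    | succ k =>
      rw [Finset.prod_empty, Finset.powersetCard_eq_empty.mpr (by simp)]
      simp [PowerSeries.coeff_one]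
  | @insert a s ha ih =>
    rw [Finset.prod_insert ha, add_mul, one_mul]
    cases k with
    | zero =>
      simp only [map_add, ih 0]
      rw [mul_assoc]
      simp [PowerSeries.coeff_zero_X_mul, mul_comm PowerSeries.X]
    | succ k =>
      rw [Finset.powersetCard_succ_insert ha, Finset.sum_union, Finset.sum_image]
      · simp only [map_add, ih]
        congr 1
        rw [mul_comm (PowerSeries.C (R := R) (c a)) PowerSeries.X, mul_assoc,
          PowerSeries.coeff_succ_X_mul, PowerSeries.coeff_C_mul, ih, Finset.mul_sum]
        refine Finset.sum_congr rfl fun A hA => ?_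
        rw [Finset.mem_powersetCard] at hA
        rw [Finset.prod_insert (fun h => ha (hA.1 h))]
      · intro A hA B hB hAB
        rw [Finset.mem_coe, Finset.mem_powersetCard] at hA hB
        have : a ∉ A := fun h => ha (hA.1 h)
        have hB' : a ∉ B := fun h => ha (hB.1 h)
        rw [← Finset.erase_insert this, hAB, Finset.erase_insert hB']
      · rw [Finset.disjoint_left]
        intro A hA hA2
        rw [Finset.mem_powersetCard] at hA
        obtain ⟨B, hB, rfl⟩ := Finset.mem_image.mp hA2
        exact ha (hA.1 (Finset.mem_insert_self a B))

/-- Coefficient of a product of `1 - c i * X`. -/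
lemma coeff_prod_one_sub (s : Finset ι) (c : ι → R) (k : ℕ) :
    PowerSeries.coeff (R := R) k (∏ i ∈ s, (1 - PowerSeries.C (R := R) (c i) * PowerSeries.X)) =
      (-1) ^ k * ∑ A ∈ s.powersetCard k, ∏ i ∈ A, c i := by
  have h := coeff_prod_one_add s (fun i => -c i) k
  simp only [map_neg, neg_mul, ← sub_eq_add_neg] at h
  rw [h, Finset.mul_sum]
  refine Finset.sum_congr rfl fun A hA => ?_
  rw [prod_neg_aux, (Finset.mem_powersetCard.mp hA).2]

end aux

lemma hsub_zero (n : ℕ) (s : Finset (Fin n)) : hsub n s 0 = 1 := by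
  rw [hsub, Finset.sym_zero, Finset.sum_singleton]
  rfl

lemma hsub_succ {n : ℕ} {a : Fin n} {s : Finset (Fin n)} (ha : a ∉ s) (r : ℕ) :
    hsub n (insert a s) (r + 1) = hsub n s (r + 1) + X a * hsub n (insert a s) r := by
  have hset : (insert a s).sym (r + 1) =
      s.sym (r + 1) ∪ ((insert a s).sym r).image (fun m => a ::ₛ m) := by
    ext m
    simp only [Finset.mem_union, Finset.mem_image, Finset.mem_sym_iff]
    constructor
    · intro h
      by_cases hm : a ∈ m
      · obtain ⟨t, rfl⟩ := Sym.exists_cons_of_mem hm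
        exact Or.inr ⟨t, fun b hb => h b (Sym.mem_cons_of_mem hb), rfl⟩
      · refine Or.inl fun b hb => ?_
        rcases Finset.mem_insert.mp (h b hb) with h1 | h1
        · exact absurd (h1 ▸ hb) hm
        · exact h1
    · rintro (h | ⟨t, ht, rfl⟩)
      · exact fun b hb => Finset.mem_insert_of_mem (h b hb)
      · intro b hb
        rcases Sym.mem_cons.mp hb with h1 | h1
        · rw [h1]; exact Finset.mem_insert_self a s
        · exact ht b h1
  have hdisj : Disjoint (s.sym (r + 1)) (((insert a s).sym r).image (fun m => a ::ₛ m)) := by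
    rw [Finset.disjoint_left]
    intro m hm hm2
    obtain ⟨t, _, rfl⟩ := Finset.mem_image.mp hm2
    rw [Finset.mem_sym_iff] at hm
    exact ha (hm a (Sym.mem_cons_self a t))
  simp only [hsub]
  rw [hset, Finset.sum_union hdisj,
    Finset.sum_image (fun m _ m' _ h => (Sym.cons_inj_right a m m').mp h)]
  rw [Finset.mul_sum]
  congr 1
  refine Finset.sum_congr rfl fun t _ => ?_
  rw [Sym.coe_cons, Multiset.map_cons, Multiset.prod_cons]

lemma prod_mul_mk_hsub (n : ℕ) (s : Finset (Fin n)) :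
    (∏ i ∈ s, (1 - PowerSeries.C (R := MvPolynomial (Fin n) ℚ) (X i) * PowerSeries.X)) *
      PowerSeries.mk (hsub n s) = 1 := by
  induction s using Finset.induction_on with
  | empty =>
    rw [Finset.prod_empty, one_mul]
    ext k
    cases k with
    | zero => simp [hsub_zero]
    | succ k =>
      rw [PowerSeries.coeff_mk]
      simp [hsub, Finset.sym_empty, PowerSeries.coeff_one]
  | @insert a s ha ih =>
    have key : (1 - PowerSeries.C (R := MvPolynomial (Fin n) ℚ) (X a) * PowerSeries.X) *
        PowerSeries.mk (hsub n (insert a s)) = PowerSeries.mk (hsub n s) := by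
      ext k
      rw [sub_mul, one_mul, mul_assoc, map_sub, PowerSeries.coeff_C_mul]
      cases k with
      | zero =>
        simp [PowerSeries.coeff_zero_X_mul, hsub_zero]
      | succ k =>
        rw [PowerSeries.coeff_succ_X_mul, PowerSeries.coeff_mk, PowerSeries.coeff_mk,
          PowerSeries.coeff_mk, hsub_succ ha]
        ring
    rw [Finset.prod_insert ha, mul_comm (1 - _) _, mul_assoc, key, ih]

/-- in `R(n) = ℚ[x₁,…,xₙ]/(e₁,…,eₙ)`, for every `r ≥ 0` and `0 ≤ d ≤ n`,
`h_r(x_1,…,x_d) = (-1)^r e_r(x_{d+1},…,x_n)`. -/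
theorem stmt1 (n : ℕ) (hn : 0 < n) (d : ℕ) (hd : d ≤ n) (r : ℕ)
    (I : Ideal (MvPolynomial (Fin n) ℚ))
    (hI : I = Ideal.span (Set.range fun i : Fin n => esymm (Fin n) ℚ ((i : ℕ) + 1))) :
    Ideal.Quotient.mk I (hsub n (Finset.univ.filter (fun i : Fin n => (i : ℕ) < d)) r) =
      (-1) ^ r *
        Ideal.Quotient.mk I (esub n (Finset.univ.filter (fun i : Fin n => d ≤ (i : ℕ))) r) := by
  classical
  set φ := Ideal.Quotient.mk I with hφ
  set S := Finset.univ.filter (fun i : Fin n => (i : ℕ) < d) with hS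
  set T := Finset.univ.filter (fun i : Fin n => d ≤ (i : ℕ)) with hT
  set Q := MvPolynomial (Fin n) ℚ ⧸ I
  -- the images of the elementary symmetric polynomials vanish
  have hzero : ∀ k : ℕ, 1 ≤ k → φ (esymm (Fin n) ℚ k) = 0 := by
    intro k hk
    by_cases hkn : k ≤ n
    · have : esymm (Fin n) ℚ k ∈ I := by
        rw [hI]
        apply Ideal.subset_span
        refine ⟨⟨k - 1, by omega⟩, ?_⟩
        simp only
        congr 1
        omega
      rwa [hφ, Ideal.Quotient.eq_zero_iff_mem]
    · have : esymm (Fin n) ℚ k = 0 := by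
        rw [esymm, Finset.powersetCard_eq_empty.mpr (by simp; omega), Finset.sum_empty]
      rw [this, map_zero]
  -- define the relevant power series over the quotient
  set PS : PowerSeries Q := ∏ i ∈ S, (1 - PowerSeries.C (R := Q) (φ (X i)) * PowerSeries.X) with hPS
  set PT : PowerSeries Q := ∏ i ∈ T, (1 - PowerSeries.C (R := Q) (φ (X i)) * PowerSeries.X) with hPT
  set H : PowerSeries Q := PowerSeries.mk (fun k => φ (hsub n S k)) with hH
  have hmap : ∀ s : Finset (Fin n),
      PowerSeries.map φ (∏ i ∈ s, (1 - PowerSeries.C (R := MvPolynomial (Fin n) ℚ) (X i) *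
        PowerSeries.X)) = ∏ i ∈ s, (1 - PowerSeries.C (R := Q) (φ (X i)) * PowerSeries.X) := by
    intro s
    rw [map_prod]
    refine Finset.prod_congr rfl fun i _ => ?_
    rw [map_sub, map_one, map_mul, PowerSeries.map_C, PowerSeries.map_X]
  have H1 : PS * H = 1 := by
    have := congrArg (PowerSeries.map φ) (prod_mul_mk_hsub n S)
    rw [map_mul, map_one, hmap] at this
    rw [hPS, hH]
    convert this using 2
    ext k
    rw [PowerSeries.coeff_mk, PowerSeries.coeff_map, PowerSeries.coeff_mk]
  have H2 : PS * PT = 1 := by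
    have hST : Disjoint S T := by
      rw [Finset.disjoint_left]
      intro i hi hi2
      rw [hS, Finset.mem_filter] at hi
      rw [hT, Finset.mem_filter] at hi2
      omega
    have hSTu : S ∪ T = Finset.univ := by
      ext i
      simp only [hS, hT, Finset.mem_union, Finset.mem_filter, Finset.mem_univ, true_and,
        Finset.mem_univ, iff_true]
      omega
    rw [hPS, hPT, ← Finset.prod_union hST, hSTu]
    ext k
    rw [coeff_prod_one_sub]
    cases k with
    | zero => simp
    | succ k =>
      have : ∑ A ∈ Finset.univ.powersetCard (k + 1), ∏ i ∈ A, φ (X i) =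
          φ (esymm (Fin n) ℚ (k + 1)) := by
        rw [esymm, map_sum]
        refine Finset.sum_congr rfl fun A _ => ?_
        rw [map_prod]
      rw [this, hzero (k + 1) (by omega)]
      simp [PowerSeries.coeff_one]
  have H3 : H = PT := by
    calc H = (PS * PT) * H := by rw [H2, one_mul]
    _ = PT * (PS * H) := by ring
    _ = PT := by rw [H1, mul_one]
  have := congrArg (PowerSeries.coeff (R := Q) r) H3
  rw [hH, PowerSeries.coeff_mk, hPT, coeff_prod_one_sub] at this
  rw [this]
  congr 1
  rw [esub, map_sum]
  refine Finset.sum_congr rfl fun A _ => ?_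
  rw [map_prod]
end

section
/- With H = [α_0^+, ∂_0^R] on Λ*(V), define S_i = (∂_i^R − [H, ∂_i^R]/2)/2. Then on a degree-k monomial P containing φ_i with k odd, S_i(P) = ∂_i^R(P), and S_i(P) = 0 whenever k is even or φ_i does not appear in P. -/
/-- The fermionic model of the exterior algebra `Λ*(V)` of an `n`-dimensional space with
basis `φ_0, …, φ_{n-1}`: the basis monomial `φ_{k_1} ∧ ⋯ ∧ φ_{k_d}` (`k_1 < ⋯ < k_d`)
corresponds to the indicator function of the set `{k_1, …, k_d}`. -/
abbrev ExtV (n : ℕ) : Type := Finset (Fin n) → ℚ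

/-- The basis monomial `φ_{k_1} ∧ ⋯ ∧ φ_{k_d}` corresponding to the set `T = {k_1,…,k_d}`. -/
noncomputable def mono (n : ℕ) (T : Finset (Fin n)) : ExtV n := Pi.single T 1

/-- The left wedge (creation) operator `α_i⁺ : v ↦ φ_i ∧ v` on basis monomials. -/
noncomputable def wedgeOp (n : ℕ) (i : Fin n) : Module.End ℚ (ExtV n) where
  toFun f S := if i ∈ S then (-1 : ℚ) ^ ((S.filter (· < i)).card) * f (S.erase i) else 0
  map_add' f g := by funext S; by_cases h : i ∈ S <;> simp [h, mul_add]
  map_smul' c f := by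
    funext S; by_cases h : i ∈ S <;> simp [h, Pi.smul_apply, smul_eq_mul]; ring

/-- The left partial derivative `∂_i^L`: on a sorted basis monomial containing `φ_i` as its
`s`-th factor it gives `(-1)^{s-1}` times the monomial with `φ_i` removed, else `0`. -/
noncomputable def delL (n : ℕ) (i : Fin n) : Module.End ℚ (ExtV n) where
  toFun f S := if i ∈ S then 0 else (-1 : ℚ) ^ ((S.filter (· < i)).card) * f (insert i S)
  map_add' f g := by funext S; by_cases h : i ∈ S <;> simp [h, mul_add]
  map_smul' c f := by
    funext S; by_cases h : i ∈ S <;> simp [h, Pi.smul_apply, smul_eq_mul]; ring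

/-- The right partial derivative `∂_i^R`: on a sorted degree-`d` basis monomial containing
`φ_i` as its `s`-th factor it gives `(-1)^{d-s}` times the monomial with `φ_i` removed,
else `0`. -/
noncomputable def delR (n : ℕ) (i : Fin n) : Module.End ℚ (ExtV n) where
  toFun f S := if i ∈ S then 0 else (-1 : ℚ) ^ ((S.filter (i < ·)).card) * f (insert i S)
  map_add' f g := by funext S; by_cases h : i ∈ S <;> simp [h, mul_add]
  map_smul' c f := by
    funext S; by_cases h : i ∈ S <;> simp [h, Pi.smul_apply, smul_eq_mul]; ring

lemma delR_mono (n : ℕ) (i : Fin n) (T : Finset (Fin n)) :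
    delR n i (mono n T) =
      if i ∈ T then ((-1:ℚ)^((T.filter (i < ·)).card)) • mono n (T.erase i) else 0 := by
  funext S
  simp only [delR, LinearMap.coe_mk, AddHom.coe_mk, mono]
  by_cases hT : i ∈ T
  · rw [if_pos hT]
    by_cases hS : i ∈ S
    · rw [if_pos hS]
      have : S ≠ T.erase i := fun h => Finset.notMem_erase i T (h ▸ hS)
      simp [Pi.single_apply, this]
    · rw [if_neg hS]
      by_cases hST : insert i S = T
      · subst hST
        rw [Finset.erase_insert hS]
        have hf : (insert i S).filter (i < ·) = S.filter (i < ·) := by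
          rw [Finset.filter_insert, if_neg (lt_irrefl i)]
        simp [hf, Pi.single_apply]
      · have hne : S ≠ T.erase i := by
          intro h; apply hST; rw [h, Finset.insert_erase hT]
        simp [Pi.single_apply, hST, hne]
  · rw [if_neg hT]
    by_cases hS : i ∈ S
    · simp [hS]
    · have : insert i S ≠ T := fun h => hT (h ▸ Finset.mem_insert_self i S)
      simp [hS, Pi.single_apply, this]

lemma wedge_mono (n : ℕ) (i : Fin n) (T : Finset (Fin n)) :
    wedgeOp n i (mono n T) =
      if i ∈ T then 0 else ((-1:ℚ)^((T.filter (· < i)).card)) • mono n (insert i T) := by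
  funext S
  simp only [wedgeOp, LinearMap.coe_mk, AddHom.coe_mk, mono]
  by_cases hT : i ∈ T
  · rw [if_pos hT]
    by_cases hS : i ∈ S
    · have : S.erase i ≠ T := fun h => (h ▸ Finset.notMem_erase i S) hT
      simp [hS, Pi.single_apply, this]
    · simp [hS]
  · rw [if_neg hT]
    by_cases hS : i ∈ S
    · rw [if_pos hS]
      by_cases hST : S = insert i T
      · subst hST
        rw [Finset.erase_insert hT]
        have hf : (insert i T).filter (· < i) = T.filter (· < i) := by
          rw [Finset.filter_insert, if_neg (lt_irrefl i)]
        simp [hf, Pi.single_apply]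
      · have hne : S.erase i ≠ T := by
          intro h; apply hST; rw [← h, Finset.insert_erase hS]
        simp [Pi.single_apply, hST, hne]
    · have : S ≠ insert i T := fun h => hS (h ▸ Finset.mem_insert_self i T)
      simp [hS, Pi.single_apply, this]

lemma H_mono (n : ℕ) (hn : 0 < n) (T : Finset (Fin n)) :
    (wedgeOp n ⟨0, hn⟩ * delR n ⟨0, hn⟩ - delR n ⟨0, hn⟩ * wedgeOp n ⟨0, hn⟩) (mono n T)
      = ((-1:ℚ)^(T.card+1)) • mono n T := by
  set z : Fin n := ⟨0, hn⟩ with hz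
  have hgt : ∀ x : Fin n, x ≠ z → z < x := fun x hx => by
    simp only [hz, Fin.lt_def]
    exact Nat.pos_of_ne_zero (fun h => hx (Fin.ext h))
  have hfilt0 : ∀ S : Finset (Fin n), S.filter (· < z) = ∅ := fun S =>
    Finset.filter_eq_empty_iff.mpr (fun x _ hx => by simp [hz, Fin.lt_def] at hx)
  simp only [LinearMap.sub_apply, Module.End.mul_apply]
  by_cases hT : z ∈ T
  · have hfe : T.filter (z < ·) = T.erase z := by
      ext x
      simp only [Finset.mem_filter, Finset.mem_erase]
      exact ⟨fun h => ⟨h.2.ne', h.1⟩, fun h => ⟨h.2, hgt x h.1⟩⟩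
    rw [wedge_mono, if_pos hT, map_zero, delR_mono, if_pos hT, map_smul, wedge_mono,
      if_neg (Finset.notMem_erase z T), hfilt0, Finset.insert_erase hT, hfe,
      Finset.card_erase_of_mem hT]
    have hc : 1 ≤ T.card := Finset.card_pos.mpr ⟨z, hT⟩
    rw [show T.card + 1 = (T.card - 1) + 2 from by omega]
    simp [smul_smul, pow_add]
  · have hfi : (insert z T).filter (z < ·) = T := by
      rw [Finset.filter_insert, if_neg (lt_irrefl z)]
      exact Finset.filter_eq_self.mpr (fun x hx => hgt x (fun h => hT (h ▸ hx)))
    rw [delR_mono, if_neg hT, map_zero, wedge_mono, if_neg hT, map_smul, delR_mono,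
      if_pos (Finset.mem_insert_self z T), hfi, Finset.erase_insert hT, hfilt0]
    simp [pow_succ]

/-- with `H = [α_0⁺, ∂_0^R]` and `S_i = (∂_i^R - [H, ∂_i^R]/2)/2`: on a
degree-`k` basis monomial `P` containing `φ_i` with `k` odd, `S_i(P) = ∂_i^R(P)`, and
`S_i(P) = 0` whenever `k` is even or `φ_i` does not appear in `P`. -/
theorem stmt14 (n : ℕ) (hn : 0 < n) (i : Fin n)
    (H : Module.End ℚ (ExtV n))
    (hH : H = wedgeOp n ⟨0, hn⟩ * delR n ⟨0, hn⟩ - delR n ⟨0, hn⟩ * wedgeOp n ⟨0, hn⟩)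
    (Si : Module.End ℚ (ExtV n))
    (hSi : Si = (2⁻¹ : ℚ) • (delR n i - (2⁻¹ : ℚ) • (H * delR n i - delR n i * H)))
    (T : Finset (Fin n)) :
    (Odd T.card → i ∈ T → Si (mono n T) = delR n i (mono n T)) ∧
    (Even T.card ∨ i ∉ T → Si (mono n T) = 0) := by
  by_cases hT : i ∈ T
  · have hc : 1 ≤ T.card := Finset.card_pos.mpr ⟨i, hT⟩
    have hD : delR n i (mono n T)
        = ((-1:ℚ)^((T.filter (i < ·)).card)) • mono n (T.erase i) := by
      rw [delR_mono, if_pos hT]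
    have h1 : H (delR n i (mono n T)) = ((-1:ℚ)^T.card) • delR n i (mono n T) := by
      rw [hD, map_smul, hH, H_mono, Finset.card_erase_of_mem hT,
        show T.card - 1 + 1 = T.card from by omega, smul_comm]
    have h2 : delR n i (H (mono n T)) = ((-1:ℚ)^(T.card+1)) • delR n i (mono n T) := by
      rw [hH, H_mono, map_smul]
    have key : Si (mono n T)
        = (2⁻¹ : ℚ) • (delR n i (mono n T) - (2⁻¹ : ℚ) •
            (((-1:ℚ)^T.card) • delR n i (mono n T)
              - ((-1:ℚ)^(T.card+1)) • delR n i (mono n T))) := by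
      rw [hSi]
      simp only [LinearMap.smul_apply, LinearMap.sub_apply, Module.End.mul_apply, h1, h2]
    constructor
    · intro hodd _
      rw [key, hodd.neg_one_pow, show ((-1:ℚ)^(T.card+1)) = 1 from by
        rw [pow_succ, hodd.neg_one_pow]; norm_num]
      module
    · rintro (heven | habs)
      · rw [key, heven.neg_one_pow, show ((-1:ℚ)^(T.card+1)) = -1 from by
          rw [pow_succ, heven.neg_one_pow]; norm_num]
        module
      · exact absurd hT habs
  · have hD : delR n i (mono n T) = 0 := by rw [delR_mono, if_neg hT]
    have h2 : delR n i (H (mono n T)) = 0 := by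
      rw [hH, H_mono, map_smul, hD, smul_zero]
    refine ⟨fun _ h => absurd h hT, fun _ => ?_⟩
    rw [hSi]
    simp [LinearMap.smul_apply, LinearMap.sub_apply, Module.End.mul_apply, hD, h2]
end

section
/- With H_0 = [E_0, F_0] where E_0 = −(∂_0^R + [H,∂_0^R]/2)/2 and F_0 = (α_0^+ − [H,α_0^+]/2)/2 and H = [α_0^+, ∂_0^R] on Λ*(V): on a degree-k basis monomial P, H_0(P) = −P if k is even and φ_0 appears in P; H_0(P) = P if k is odd and φ_0 does not appear in P; and H_0(P) = 0 otherwise. -/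
lemma filter_lt_zero {n : ℕ} (hn : 0 < n) (S : Finset (Fin n)) :
    S.filter (· < (⟨0, hn⟩ : Fin n)) = ∅ := by
  apply Finset.filter_false_of_mem; intro x _; simp [Fin.lt_def]

lemma filter_gt_zero {n : ℕ} (hn : 0 < n) (S : Finset (Fin n))
    (h : (⟨0, hn⟩ : Fin n) ∉ S) : S.filter ((⟨0, hn⟩ : Fin n) < ·) = S := by
  apply Finset.filter_true_of_mem; intro x hx
  have : x ≠ (⟨0, hn⟩ : Fin n) := fun e => h (e ▸ hx)
  have : x.val ≠ 0 := fun e => this (Fin.ext e)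
  simp [Fin.lt_def]; omega

lemma mono_apply (n : ℕ) (T S : Finset (Fin n)) :
    mono n T S = if S = T then 1 else 0 := by
  simp [mono, Pi.single_apply]

lemma wedge_mono_not {n : ℕ} (hn : 0 < n) (T : Finset (Fin n))
    (hT : (⟨0, hn⟩ : Fin n) ∉ T) :
    wedgeOp n ⟨0, hn⟩ (mono n T) = mono n (insert ⟨0, hn⟩ T) := by
  set i : Fin n := ⟨0, hn⟩
  funext S
  simp only [wedgeOp, LinearMap.coe_mk, AddHom.coe_mk, filter_lt_zero hn, Finset.card_empty,
    pow_zero, one_mul, mono_apply]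
  by_cases h : i ∈ S
  · simp only [h, if_true]
    by_cases h2 : S = insert i T
    · have : S.erase i = T := by
        rw [h2, Finset.erase_insert hT]
      simp [h2, this, hT]
      simp [i, Fin.lt_def]
    · have : S.erase i ≠ T := by
        intro e
        exact h2 (by rw [← e, Finset.insert_erase h])
      simp [h2, this]
  · have : S ≠ insert i T := by
      intro e; exact h (e ▸ Finset.mem_insert_self i T)
    simp [h, this]

lemma wedge_mono_mem {n : ℕ} (hn : 0 < n) (T : Finset (Fin n))
    (hT : (⟨0, hn⟩ : Fin n) ∈ T) :
    wedgeOp n ⟨0, hn⟩ (mono n T) = 0 := by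
  set i : Fin n := ⟨0, hn⟩
  funext S
  simp only [wedgeOp, LinearMap.coe_mk, AddHom.coe_mk, mono_apply, Pi.zero_apply]
  by_cases h : i ∈ S
  · have : S.erase i ≠ T := by
      intro e; exact (Finset.notMem_erase i S) (e ▸ hT)
    simp [h, this]
  · simp [h]

lemma delR_mono_not {n : ℕ} (hn : 0 < n) (T : Finset (Fin n))
    (hT : (⟨0, hn⟩ : Fin n) ∉ T) :
    delR n ⟨0, hn⟩ (mono n T) = 0 := by
  set i : Fin n := ⟨0, hn⟩
  funext S
  simp only [delR, LinearMap.coe_mk, AddHom.coe_mk, mono_apply, Pi.zero_apply]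
  by_cases h : i ∈ S
  · simp [h]
  · have : insert i S ≠ T := by
      intro e; exact hT (e ▸ Finset.mem_insert_self i S)
    simp [h, this]

lemma delR_mono_ins {n : ℕ} (hn : 0 < n) (T : Finset (Fin n))
    (hT : (⟨0, hn⟩ : Fin n) ∉ T) :
    delR n ⟨0, hn⟩ (mono n (insert ⟨0, hn⟩ T)) = ((-1 : ℚ) ^ T.card) • mono n T := by
  set i : Fin n := ⟨0, hn⟩
  funext S
  simp only [delR, LinearMap.coe_mk, AddHom.coe_mk, mono_apply, Pi.smul_apply, smul_eq_mul]
  by_cases h : i ∈ S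
  · have : S ≠ T := fun e => hT (e ▸ h)
    simp [h, this]
  · by_cases h2 : S = T
    · subst h2
      simp [h, filter_gt_zero hn S h]
      congr 2
      exact filter_gt_zero hn S h
    · have : insert i S ≠ insert i T := by
        intro e
        apply h2
        have := congrArg (Finset.erase · i) e
        simpa [Finset.erase_insert h, Finset.erase_insert hT] using this
      simp [h, h2, this]
lemma core (n : ℕ) (hn : 0 < n)
    (H E0 F0 H0 : Module.End ℚ (ExtV n))
    (hH : H = wedgeOp n ⟨0, hn⟩ * delR n ⟨0, hn⟩ - delR n ⟨0, hn⟩ * wedgeOp n ⟨0, hn⟩)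
    (hE0 : E0 = -((2⁻¹ : ℚ) • (delR n ⟨0, hn⟩ +
      (2⁻¹ : ℚ) • (H * delR n ⟨0, hn⟩ - delR n ⟨0, hn⟩ * H))))
    (hF0 : F0 = (2⁻¹ : ℚ) • (wedgeOp n ⟨0, hn⟩ -
      (2⁻¹ : ℚ) • (H * wedgeOp n ⟨0, hn⟩ - wedgeOp n ⟨0, hn⟩ * H)))
    (hH0 : H0 = E0 * F0 - F0 * E0)
    (T : Finset (Fin n)) (hT : (⟨0, hn⟩ : Fin n) ∉ T) :
    H0 (mono n T) = ((1 - (-1 : ℚ) ^ T.card) ^ 2 / 4) • mono n T ∧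
    H0 (mono n (insert ⟨0, hn⟩ T)) =
      (-((1 - (-1 : ℚ) ^ T.card) ^ 2 / 4)) • mono n (insert ⟨0, hn⟩ T) := by
  set x := mono n T with hx
  set y := mono n (insert ⟨0, hn⟩ T) with hy
  set ε : ℚ := (-1) ^ T.card with hεdef
  have hεε : ε * ε = 1 := by rw [hεdef, ← mul_pow]; norm_num
  have hax : wedgeOp n ⟨0, hn⟩ x = y := wedge_mono_not hn T hT
  have hay : wedgeOp n ⟨0, hn⟩ y = 0 := wedge_mono_mem hn _ (Finset.mem_insert_self _ T)
  have hbx : delR n ⟨0, hn⟩ x = 0 := delR_mono_not hn T hT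
  have hby : delR n ⟨0, hn⟩ y = ε • x := delR_mono_ins hn T hT
  have hHx : H x = -(ε • x) := by
    rw [hH]
    simp only [LinearMap.sub_apply, Module.End.mul_apply, hax, hbx, hby, map_zero]
    module
  have hHy : H y = ε • y := by
    rw [hH]
    simp only [LinearMap.sub_apply, Module.End.mul_apply, hay, hby, map_zero, map_smul, hax]
    module
  have hE0x : E0 x = 0 := by
    rw [hE0]
    simp only [LinearMap.neg_apply, LinearMap.smul_apply, LinearMap.add_apply,
      LinearMap.sub_apply, Module.End.mul_apply, hbx, hHx, map_zero, map_neg, map_smul,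
      hbx, smul_zero, neg_zero, sub_zero, add_zero, neg_neg]
  have hE0y : E0 y = ((1 - ε) / 2) • x := by
    rw [hE0]
    simp only [LinearMap.neg_apply, LinearMap.smul_apply, LinearMap.add_apply,
      LinearMap.sub_apply, Module.End.mul_apply, hby, hHy, map_smul, hHx, hby,
      smul_neg, smul_smul, hεε, one_smul]
    module
  have hF0y : F0 y = 0 := by
    rw [hF0]
    simp only [LinearMap.smul_apply, LinearMap.sub_apply, Module.End.mul_apply, hay,
      hHy, map_zero, map_smul, hay, smul_zero, sub_zero]
  have hF0x : F0 x = ((1 - ε) / 2) • y := by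
    rw [hF0]
    simp only [LinearMap.smul_apply, LinearMap.sub_apply, Module.End.mul_apply, hax,
      hHy, hHx, map_neg, map_smul, hax]
    module
  constructor
  · rw [hH0]
    simp only [LinearMap.sub_apply, Module.End.mul_apply, hF0x, hE0x, map_zero, map_smul,
      hE0y, smul_smul]
    match_scalars
    ring
  · rw [hH0]
    simp only [LinearMap.sub_apply, Module.End.mul_apply, hF0y, hE0y, map_zero, map_smul,
      hF0x, smul_smul]
    match_scalars
    ring

/-- with `H = [α_0⁺, ∂_0^R]`, `E_0 = -(∂_0^R + [H,∂_0^R]/2)/2`,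
`F_0 = (α_0⁺ - [H,α_0⁺]/2)/2` and `H_0 = [E_0, F_0]`: on a degree-`k` basis monomial `P`,
`H_0(P) = -P` if `k` is even and `φ_0` appears in `P`; `H_0(P) = P` if `k` is odd and `φ_0`
does not appear in `P`; and `H_0(P) = 0` otherwise. -/
theorem stmt16 (n : ℕ) (hn : 0 < n)
    (H E0 F0 H0 : Module.End ℚ (ExtV n))
    (hH : H = wedgeOp n ⟨0, hn⟩ * delR n ⟨0, hn⟩ - delR n ⟨0, hn⟩ * wedgeOp n ⟨0, hn⟩)
    (hE0 : E0 = -((2⁻¹ : ℚ) • (delR n ⟨0, hn⟩ +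
      (2⁻¹ : ℚ) • (H * delR n ⟨0, hn⟩ - delR n ⟨0, hn⟩ * H))))
    (hF0 : F0 = (2⁻¹ : ℚ) • (wedgeOp n ⟨0, hn⟩ -
      (2⁻¹ : ℚ) • (H * wedgeOp n ⟨0, hn⟩ - wedgeOp n ⟨0, hn⟩ * H)))
    (hH0 : H0 = E0 * F0 - F0 * E0)
    (T : Finset (Fin n)) :
    (Even T.card → (⟨0, hn⟩ : Fin n) ∈ T → H0 (mono n T) = -mono n T) ∧
    (Odd T.card → (⟨0, hn⟩ : Fin n) ∉ T → H0 (mono n T) = mono n T) ∧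
    ((Even T.card ∧ (⟨0, hn⟩ : Fin n) ∉ T) ∨ (Odd T.card ∧ (⟨0, hn⟩ : Fin n) ∈ T) →
      H0 (mono n T) = 0) := by
  by_cases hT : (⟨0, hn⟩ : Fin n) ∈ T
  · obtain ⟨h1, h2⟩ := core n hn H E0 F0 H0 hH hE0 hF0 hH0 (T.erase ⟨0, hn⟩)
      (Finset.notMem_erase _ _)
    rw [Finset.insert_erase hT] at h2
    have hc : (T.erase (⟨0, hn⟩ : Fin n)).card = T.card - 1 := Finset.card_erase_of_mem hT
    have hpos : 1 ≤ T.card := Finset.card_pos.mpr ⟨_, hT⟩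
    refine ⟨?_, ?_, ?_⟩
    · intro he _
      have hodd : Odd (T.erase (⟨0, hn⟩ : Fin n)).card := by
        rw [hc, Nat.odd_iff]; rw [Nat.even_iff] at he; omega
      rw [h2, Odd.neg_one_pow hodd]
      norm_num
    · intro _ hmem; exact absurd hT hmem
    · rintro (⟨_, hnmem⟩ | ⟨ho, _⟩)
      · exact absurd hT hnmem
      · have heven : Even (T.erase (⟨0, hn⟩ : Fin n)).card := by
          rw [hc, Nat.even_iff]; rw [Nat.odd_iff] at ho; omega
        rw [h2, Even.neg_one_pow heven]
        norm_num
  · obtain ⟨h1, _⟩ := core n hn H E0 F0 H0 hH hE0 hF0 hH0 T hT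
    refine ⟨fun _ hmem => absurd hmem hT, ?_, ?_⟩
    · intro ho _
      rw [h1, Odd.neg_one_pow ho]
      norm_num
    · rintro (⟨he, _⟩ | ⟨_, hmem⟩)
      · rw [h1, Even.neg_one_pow he]
        norm_num
      · exact absurd hmem hT
end
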